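/- Let F₁ and F₂ be 4×3 matrices each obtained by selecting 3 distinct columns from (possibly different) members of a set of pairwise mutually unbiased 4×4 unitary bases {D, D², D³, D⁴} all of whose entries lie in {±1/2, ±j/2}, with F₁, F₂ coming from distinct bases. Then |det(F₁* F₂)| = 1/2. -/

import Mathlib

open Matrix

lemma inj_factor (c : Fin 3 → Fin 4) (hc : Function.Injective c) :
    ∃ (k : Fin 4) (σ : Equiv.Perm (Fin 3)), ∀ i, c i = k.succAbove (σ i) := by
  have hns : ¬ Function.Surjective c := by
    intro h
    have := Fintype.card_le_of_surjective c h
    simp at this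
  obtain ⟨k, hk⟩ : ∃ k, ∀ i, c i ≠ k := by
    by_contra h
    push_neg at h
    exact hns fun b => h b
  have hmem : ∀ i, c i ∈ Set.range k.succAbove := by
    intro i
    rw [Fin.range_succAbove]
    exact fun h => hk i h
  choose f hf using hmem
  have hfi : Function.Injective f := by
    intro a b hab
    apply hc
    rw [← hf a, ← hf b, hab]
  exact ⟨k, Equiv.ofBijective f (Finite.injective_iff_bijective.mp hfi),
    fun i => (hf i).symm⟩

lemma abs_sign (σ : Equiv.Perm (Fin 3)) :
    ‖((Equiv.Perm.sign σ : ℤ) : ℂ)‖ = 1 := by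
  rcases Int.units_eq_one_or (Equiv.Perm.sign σ) with h | h <;> rw [h] <;> simp

lemma abs_det_unitary {U : Matrix (Fin 4) (Fin 4) ℂ}
    (hU : U ∈ Matrix.unitaryGroup (Fin 4) ℂ) : ‖U.det‖ = 1 := by
  have h := (Unitary.mem_iff.mp (Matrix.det_of_mem_unitary hU)).1
  have h2 : (Complex.normSq U.det : ℂ) = 1 := by
    rw [Complex.normSq_eq_conj_mul_self]; exact h
  have h3 : Complex.normSq U.det = 1 := by exact_mod_cast h2
  rw [Complex.norm_def, h3, Real.sqrt_one]

lemma abs_det_submatrix (U : Matrix (Fin 4) (Fin 4) ℂ)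
    (hU : U ∈ Matrix.unitaryGroup (Fin 4) ℂ)
    (hent : ∀ i j, ‖U i j‖ = 1/2)
    (c₁ c₂ : Fin 3 → Fin 4) (hc₁ : Function.Injective c₁) (hc₂ : Function.Injective c₂) :
    ‖(U.submatrix c₁ c₂).det‖ = 1/2 := by
  obtain ⟨k₁, σ₁, h1⟩ := inj_factor c₁ hc₁
  obtain ⟨k₂, σ₂, h2⟩ := inj_factor c₂ hc₂
  have hsub : U.submatrix c₁ c₂ =
      ((U.submatrix k₁.succAbove k₂.succAbove).submatrix σ₁ id).submatrix id σ₂ := by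
    ext i j; simp [h1, h2]
  have hadj : adjugate U = U.det • Uᴴ := by
    have hmem := (Unitary.mem_iff.mp hU).2
    have h1' : U * Uᴴ = 1 := by
      simpa [Matrix.star_eq_conjTranspose] using hmem
    calc adjugate U = adjugate U * (U * Uᴴ) := by rw [h1', mul_one]
      _ = (adjugate U * U) * Uᴴ := by rw [mul_assoc]
      _ = U.det • Uᴴ := by rw [adjugate_mul, Matrix.smul_mul, one_mul]
  have hkey : ‖(U.submatrix k₁.succAbove k₂.succAbove).det‖ = 1/2 := by
    have heq := adjugate_fin_succ_eq_det_submatrix U k₂ k₁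
    have habs : ‖adjugate U k₂ k₁‖
        = ‖(U.submatrix k₁.succAbove k₂.succAbove).det‖ := by
      rw [heq, norm_mul, norm_pow]
      simp
    rw [← habs, hadj]
    simp only [Matrix.smul_apply, Matrix.conjTranspose_apply, smul_eq_mul, norm_mul]
    rw [abs_det_unitary hU, one_mul,
      show star (U k₁ k₂) = (starRingEnd ℂ) (U k₁ k₂) from rfl, Complex.norm_conj]
    exact hent k₁ k₂
  rw [hsub, det_permute', det_permute, norm_mul, norm_mul, abs_sign, abs_sign,
    one_mul, one_mul]
  exact hkey

theorem kerdock_three_stream_determinant (D : Matrix (Fin 4) (Fin 4) ℂ)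
    (hU : D ∈ Matrix.unitaryGroup (Fin 4) ℂ) (h5 : D ^ 5 = 1)
    (halpha : ∀ n : ℕ, 1 ≤ n → n ≤ 4 → ∀ i j : Fin 4,
      (D ^ n) i j ∈ ({1 / 2, -(1 / 2), Complex.I / 2, -(Complex.I / 2)} : Set ℂ))
    (p q : ℕ) (hp1 : 1 ≤ p) (hp4 : p ≤ 4) (hq1 : 1 ≤ q) (hq4 : q ≤ 4) (hpq : p ≠ q)
    (c₁ c₂ : Fin 3 → Fin 4) (hc₁ : Function.Injective c₁) (hc₂ : Function.Injective c₂)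
    (F₁ F₂ : Matrix (Fin 4) (Fin 3) ℂ)
    (hF₁ : F₁ = (D ^ p).submatrix id c₁) (hF₂ : F₂ = (D ^ q).submatrix id c₂) :
    ‖(F₁ᴴ * F₂).det‖ = 1 / 2 := by
  subst hF₁ hF₂
  have hstar : (D^p)ᴴ * (D^p) = 1 := by
    have := (Unitary.mem_iff.mp (pow_mem hU p)).1
    simpa [Matrix.star_eq_conjTranspose] using this
  obtain ⟨r, hr1, hr4, hprod⟩ : ∃ r, 1 ≤ r ∧ r ≤ 4 ∧ (D^p)ᴴ * (D^q) = D^r := by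
    rcases lt_or_gt_of_ne hpq with h | h
    · refine ⟨q - p, by omega, by omega, ?_⟩
      have hq' : D ^ q = D ^ p * D ^ (q - p) := by rw [← pow_add]; congr 1; omega
      rw [hq', ← mul_assoc, hstar, one_mul]
    · refine ⟨q + 5 - p, by omega, by omega, ?_⟩
      have hq' : D ^ q = D ^ p * D ^ (q + 5 - p) := by
        rw [← pow_add]
        have h1 : p + (q + 5 - p) = q + 5 := by omega
        rw [h1, pow_add, h5, mul_one]
      rw [hq', ← mul_assoc, hstar, one_mul]
  have hmul : ((D^p).submatrix id c₁)ᴴ * ((D^q).submatrix id c₂)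
      = (D^r).submatrix c₁ c₂ := by
    rw [← hprod]
    ext i j
    simp [Matrix.mul_apply]
  rw [hmul]
  have hent : ∀ i j, ‖(D^r) i j‖ = 1/2 := by
    intro i j
    rcases halpha r hr1 hr4 i j with h | h | h | h <;> rw [h] <;>
      simp [norm_div]
  exact abs_det_submatrix (D^r) (pow_mem hU r) hent c₁ c₂ hc₁ hc₂
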